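/- Let α > −1, let q ≥ 0 be an integer, and let n ≥ 1 be an integer. Suppose G is a monic polynomial of degree 2n with real coefficients such that ∫_{−1}^{1} |x|^{2q+2} (1−x²)^α x^k G(x) dx = 0 for all integers 0 ≤ k ≤ 2n−1. Then ∫_{−1}^{1} x^{2q+1} (1−x²)^α (1−x) x^k G(x) dx = 0 for all integers 0 ≤ k ≤ 2n−1. -/

import Mathlib

open MeasureTheory intervalIntegral Polynomial
open Set

/-- The monic generalized Gegenbauer polynomial `G` of degree `2n` for the weight
`|x|^{2q+2}(1−x²)^α` is also orthogonal to `x^k`, `0 ≤ k ≤ 2n−1`, with respect to the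
signed weight `x^{2q+1}(1−x²)^α(1−x)` on `(−1,1)`. -/
private lemma gg_intOn01 (α : ℝ) (hα : -1 < α) (P : Polynomial ℝ) :
    IntervalIntegrable (fun x => (1 - x ^ 2) ^ α * P.eval x) volume 0 1 := by
  obtain ⟨M, hM⟩ := (isCompact_Icc (a := (0:ℝ)) (b := 1)).exists_bound_of_continuousOn
    (P.continuous.continuousOn)
  have hM0 : 0 ≤ M := le_trans (norm_nonneg _) (hM 0 (by norm_num))
  have base : IntervalIntegrable (fun x : ℝ => (1 - x) ^ α) volume 0 1 := by
    have h := intervalIntegrable_rpow' (a := 0) (b := 1) hα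
    have h2 := ((IntervalIntegrable.iff_comp_neg (by simp)).mp h)
    have h3 := (h2.comp_sub_right 1).symm
    norm_num at h3
    exact h3
  refine (base.const_mul ((2:ℝ) ^ |α| * M)).mono_fun ?_ ?_
  · apply Measurable.aestronglyMeasurable
    have : Measurable fun x : ℝ => (1 - x ^ 2) ^ α := by measurability
    exact this.mul P.continuous.measurable
  · filter_upwards [ae_restrict_mem measurableSet_uIoc] with x hx
    rw [Set.uIoc_of_le (by norm_num : (0:ℝ) ≤ 1)] at hx
    obtain ⟨hx0, hx1⟩ := hx
    have h1x : (0:ℝ) ≤ 1 - x := by linarith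
    have h1x' : (0:ℝ) ≤ 1 + x := by linarith
    have hsplit : (1 - x ^ 2) ^ α = (1 - x) ^ α * (1 + x) ^ α := by
      rw [← Real.mul_rpow h1x h1x']; ring_nf
    have hb : (1 + x) ^ α ≤ (2:ℝ) ^ |α| := by
      rcases le_or_gt 0 α with h | h
      · rw [abs_of_nonneg h]
        exact Real.rpow_le_rpow h1x' (by linarith) h
      · calc (1 + x) ^ α ≤ 1 := Real.rpow_le_one_of_one_le_of_nonpos (by linarith) h.le
          _ ≤ (2:ℝ) ^ |α| := Real.one_le_rpow (by norm_num) (abs_nonneg _)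
    simp only [norm_mul, Real.norm_eq_abs]
    rw [abs_of_nonneg (Real.rpow_nonneg (by nlinarith) α),
      abs_of_nonneg (by positivity : (0:ℝ) ≤ (2:ℝ)^|α|), abs_of_nonneg hM0,
      abs_of_nonneg (Real.rpow_nonneg h1x α), hsplit]
    have hPx : |P.eval x| ≤ M := by
      simpa [Real.norm_eq_abs] using hM x ⟨hx0.le, hx1⟩
    calc (1 - x) ^ α * (1 + x) ^ α * |P.eval x|
        ≤ (1 - x) ^ α * ((2:ℝ) ^ |α|) * M := by
          apply mul_le_mul _ hPx (abs_nonneg _) (by positivity)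
          exact mul_le_mul_of_nonneg_left hb (Real.rpow_nonneg h1x α)
      _ = (2:ℝ) ^ |α| * M * (1 - x) ^ α := by ring

private lemma gg_intAll (α : ℝ) (hα : -1 < α) (P : Polynomial ℝ) :
    IntervalIntegrable (fun x => (1 - x ^ 2) ^ α * P.eval x) volume (-1) 1 := by
  have h2 := gg_intOn01 α hα (P.comp (-X))
  have h3 := ((IntervalIntegrable.iff_comp_neg (by simp)).mp h2).symm
  norm_num at h3
  exact h3.trans (gg_intOn01 α hα P)

private lemma gg_Ineg (f : ℝ → ℝ) :
    (∫ x in (-1:ℝ)..1, f (-x)) = ∫ x in (-1:ℝ)..1, f x := by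
  simpa using intervalIntegral.integral_comp_neg (a := (-1:ℝ)) (b := 1) f

theorem gg_orthogonal_signed_weight (α : ℝ) (hα : -1 < α) (q : ℕ) (n : ℕ) (hn : 1 ≤ n)
    (G : Polynomial ℝ) (hGm : G.Monic) (hGd : G.natDegree = 2 * n)
    (hG : ∀ k : ℕ, k < 2 * n →
      ∫ x in (-1 : ℝ)..1, |x| ^ (2 * q + 2) * (1 - x ^ 2) ^ α * x ^ k * G.eval x = 0) :
    ∀ k : ℕ, k < 2 * n →
      ∫ x in (-1 : ℝ)..1, x ^ (2 * q + 1) * (1 - x ^ 2) ^ α * (1 - x) * x ^ k * G.eval x = 0 := by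
  have habs : ∀ x : ℝ, |x| ^ (2 * q + 2) = x ^ (2 * q + 2) := by
    intro x
    rw [← abs_pow, abs_of_nonneg]
    rw [show 2 * q + 2 = (q + 1) * 2 by ring, pow_mul]
    positivity
  have hG' : ∀ k : ℕ, k < 2 * n →
      (∫ x in (-1 : ℝ)..1, (1 - x ^ 2) ^ α * (x ^ (2 * q + 2 + k) * G.eval x)) = 0 := by
    intro k hk
    rw [← hG k hk]
    congr 1; funext x
    rw [habs x, pow_add]
    ring
  have intM : ∀ (m : ℕ) (P : Polynomial ℝ),
      IntervalIntegrable (fun x => (1 - x ^ 2) ^ α * (x ^ m * P.eval x)) volume (-1) 1 := by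
    intro m P
    have := gg_intAll α hα (X ^ m * P)
    simpa [eval_mul, eval_pow] using this
  -- D = odd part defect of G
  set D : Polynomial ℝ := G - G.comp (-X) with hDdef
  have hevalD : ∀ x : ℝ, D.eval x = G.eval x - G.eval (-x) := by
    intro x; simp [hDdef, eval_comp]
  have hcompdeg : (G.comp (-X)).natDegree = 2 * n := by
    rw [natDegree_comp, hGd]; simp
  have hcomplead : (G.comp (-X)).leadingCoeff = 1 := by
    rw [leadingCoeff_comp (by simp), hGm.leadingCoeff, hGd]
    simp [pow_mul]
  have hDdeg : D.natDegree < 2 * n := by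
    rcases eq_or_ne D 0 with h | h
    · rw [h]; simp only [natDegree_zero]; omega
    · have hc0 : G.comp (-X) ≠ 0 := fun hc => by simp [hc] at hcomplead
      have hdlt : D.degree < G.degree := by
        apply degree_sub_lt _ hGm.ne_zero
        · rw [hGm.leadingCoeff, hcomplead]
        · rw [degree_eq_natDegree hGm.ne_zero, degree_eq_natDegree hc0, hGd, hcompdeg]
      have h2 := (natDegree_lt_natDegree_iff h).mpr hdlt
      omega
  -- D orthogonal to monomials
  have hD : ∀ k : ℕ, k < 2 * n →
      (∫ x in (-1 : ℝ)..1, (1 - x ^ 2) ^ α * (x ^ (2 * q + 2 + k) * D.eval x)) = 0 := by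
    intro k hk
    have hInt2 : IntervalIntegrable
        (fun x => (1 - x ^ 2) ^ α * (x ^ (2 * q + 2 + k) * G.eval (-x))) volume (-1) 1 := by
      have := intM (2 * q + 2 + k) (G.comp (-X))
      simpa [eval_comp] using this
    have hsecond : (∫ x in (-1 : ℝ)..1, (1 - x ^ 2) ^ α * (x ^ (2 * q + 2 + k) * G.eval (-x)))
        = 0 := by
      calc (∫ x in (-1 : ℝ)..1, (1 - x ^ 2) ^ α * (x ^ (2 * q + 2 + k) * G.eval (-x)))
          = ∫ y in (-1 : ℝ)..1, (1 - y ^ 2) ^ α * ((-y) ^ (2 * q + 2 + k) * G.eval y) := by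
            rw [← gg_Ineg (fun y => (1 - y ^ 2) ^ α * ((-y) ^ (2 * q + 2 + k) * G.eval y))]
            congr 1; funext x; simp only [neg_neg, neg_sq]
        _ = ∫ y in (-1 : ℝ)..1,
              (-1 : ℝ) ^ (2 * q + 2 + k) * ((1 - y ^ 2) ^ α * (y ^ (2 * q + 2 + k) * G.eval y)) := by
            congr 1; funext y; rw [neg_pow]; ring
        _ = (-1 : ℝ) ^ (2 * q + 2 + k) *
              ∫ y in (-1 : ℝ)..1, (1 - y ^ 2) ^ α * (y ^ (2 * q + 2 + k) * G.eval y) :=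
            intervalIntegral.integral_const_mul _ _
        _ = 0 := by rw [hG' k hk, mul_zero]
    have hsplit : (∫ x in (-1 : ℝ)..1, (1 - x ^ 2) ^ α * (x ^ (2 * q + 2 + k) * D.eval x))
        = (∫ x in (-1 : ℝ)..1, (1 - x ^ 2) ^ α * (x ^ (2 * q + 2 + k) * G.eval x))
          - ∫ x in (-1 : ℝ)..1, (1 - x ^ 2) ^ α * (x ^ (2 * q + 2 + k) * G.eval (-x)) := by
      rw [← intervalIntegral.integral_sub (intM _ G) hInt2]
      congr 1; funext x; rw [hevalD]; ring
    rw [hsplit, hsecond, hG' k hk, sub_zero]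
  -- weighted integral of D² vanishes
  have hDD : (∫ x in (-1 : ℝ)..1,
      (1 - x ^ 2) ^ α * (x ^ (2 * q + 2) * (D.eval x * D.eval x))) = 0 := by
    calc (∫ x in (-1 : ℝ)..1, (1 - x ^ 2) ^ α * (x ^ (2 * q + 2) * (D.eval x * D.eval x)))
        = ∫ x in (-1 : ℝ)..1, ∑ k ∈ Finset.range (2 * n),
            D.coeff k * ((1 - x ^ 2) ^ α * (x ^ (2 * q + 2 + k) * D.eval x)) := by
          congr 1; funext x
          rw [show D.eval x * D.eval x
              = (∑ k ∈ Finset.range (2 * n), D.coeff k * x ^ k) * D.eval x from by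
            rw [← eval_eq_sum_range' hDdeg]]
          rw [Finset.sum_mul, Finset.mul_sum, Finset.mul_sum]
          apply Finset.sum_congr rfl
          intro k _
          rw [pow_add]
          ring
      _ = ∑ k ∈ Finset.range (2 * n), ∫ x in (-1 : ℝ)..1,
            D.coeff k * ((1 - x ^ 2) ^ α * (x ^ (2 * q + 2 + k) * D.eval x)) := by
          apply intervalIntegral.integral_finset_sum
          intro k _
          exact (intM (2 * q + 2 + k) D).const_mul _
      _ = 0 := by
          apply Finset.sum_eq_zero
          intro k hk
          rw [intervalIntegral.integral_const_mul, hD k (Finset.mem_range.mp hk), mul_zero]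
  -- hence D = 0
  have hDzero : D = 0 := by
    by_contra hD0
    have hint : IntegrableOn
        (fun x => (1 - x ^ 2) ^ α * (x ^ (2 * q + 2) * (D.eval x * D.eval x)))
        (Ioc (-1 : ℝ) 1) volume := by
      have h := intM (2 * q + 2) (D * D)
      simp only [eval_mul] at h
      exact h.1
    have hnonneg : 0 ≤ᵐ[volume.restrict (Ioc (-1 : ℝ) 1)]
        fun x => (1 - x ^ 2) ^ α * (x ^ (2 * q + 2) * (D.eval x * D.eval x)) := by
      filter_upwards [ae_restrict_mem measurableSet_Ioc] with x hx
      have h1 : (0:ℝ) ≤ 1 - x ^ 2 := by nlinarith [hx.1, hx.2]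
      have h2 : (0:ℝ) ≤ x ^ (2 * q + 2) := by
        rw [show 2 * q + 2 = (q + 1) * 2 by ring, pow_mul]; positivity
      exact mul_nonneg (Real.rpow_nonneg h1 α) (mul_nonneg h2 (mul_self_nonneg _))
    have hizero : (∫ x in Ioc (-1 : ℝ) 1,
        (1 - x ^ 2) ^ α * (x ^ (2 * q + 2) * (D.eval x * D.eval x))) = 0 := by
      rw [← intervalIntegral.integral_of_le (by norm_num : (-1:ℝ) ≤ 1)]
      exact hDD
    have haezero := (setIntegral_eq_zero_iff_of_nonneg_ae hnonneg hint).mp hizero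
    rw [Filter.EventuallyEq, ae_iff] at haezero
    simp only [Pi.zero_apply] at haezero
    rw [Measure.restrict_apply' measurableSet_Ioc] at haezero
    have hRfin : {x : ℝ | D.IsRoot x}.Finite := D.finite_setOf_isRoot hD0
    have hsub : Ioo (-1 : ℝ) 1 ⊆
        ({x : ℝ | ¬ (1 - x ^ 2) ^ α * (x ^ (2 * q + 2) * (D.eval x * D.eval x)) = 0}
          ∩ Ioc (-1 : ℝ) 1) ∪ ({x : ℝ | D.IsRoot x} ∪ {(0:ℝ)}) := by
      intro x hx
      rcases eq_or_ne x 0 with h0 | h0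
      · exact Or.inr (Or.inr (by simp [h0]))
      rcases Classical.em (D.IsRoot x) with hr | hr
      · exact Or.inr (Or.inl hr)
      · left
        refine ⟨?_, hx.1, hx.2.le⟩
        have h1 : (0:ℝ) < 1 - x ^ 2 := by nlinarith [hx.1, hx.2]
        have h2 : (0:ℝ) < x ^ (2 * q + 2) := by
          rw [show 2 * q + 2 = (q + 1) * 2 by ring, pow_mul]
          have : x ^ (q + 1) ≠ 0 := pow_ne_zero _ h0
          positivity
        have h3 : (0:ℝ) < D.eval x * D.eval x := mul_self_pos.mpr hr
        have := mul_pos (Real.rpow_pos_of_pos h1 α) (mul_pos h2 h3)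
        exact this.ne'
    have hle : volume (Ioo (-1:ℝ) 1) ≤
        volume ({x : ℝ | ¬ (1 - x ^ 2) ^ α * (x ^ (2 * q + 2) * (D.eval x * D.eval x)) = 0}
          ∩ Ioc (-1 : ℝ) 1) + volume ({x : ℝ | D.IsRoot x} ∪ {(0:ℝ)}) :=
      (measure_mono hsub).trans (measure_union_le _ _)
    rw [haezero, measure_union_null (hRfin.measure_zero _) (measure_singleton 0),
      add_zero, Real.volume_Ioo] at hle
    norm_num at hle
  -- G is even
  have hGeven : ∀ x : ℝ, G.eval (-x) = G.eval x := by
    intro x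
    have h := hevalD x
    rw [hDzero] at h
    simp at h
    linarith [h]
  -- conclusion
  intro k hk
  have hkey : (fun x : ℝ => x ^ (2 * q + 1) * (1 - x ^ 2) ^ α * (1 - x) * x ^ k * G.eval x)
      = fun x : ℝ => (1 - x ^ 2) ^ α * (x ^ (2 * q + 1 + k) * G.eval x)
        - (1 - x ^ 2) ^ α * (x ^ (2 * q + 2 + k) * G.eval x) := by
    funext x
    rw [show 2 * q + 2 + k = 2 * q + 1 + (k + 1) by omega, pow_add x (2 * q + 1) (k + 1),
      pow_add x (2 * q + 1) k, pow_succ x k]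
    ring
  rw [hkey, intervalIntegral.integral_sub (intM _ G) (intM _ G), hG' k hk, sub_zero]
  cases k with
  | succ j =>
      rw [show 2 * q + 1 + (j + 1) = 2 * q + 2 + j by omega]
      exact hG' j (by omega)
  | zero =>
      have hodd :
          (∫ x in (-1 : ℝ)..1, (1 - x ^ 2) ^ α * (x ^ (2 * q + 1 + 0) * G.eval x))
          = - ∫ x in (-1 : ℝ)..1, (1 - x ^ 2) ^ α * (x ^ (2 * q + 1 + 0) * G.eval x) := by
        conv_lhs => rw [← gg_Ineg (fun y => (1 - y ^ 2) ^ α * (y ^ (2 * q + 1 + 0) * G.eval y))]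
        calc (∫ x in (-1 : ℝ)..1, (1 - (-x) ^ 2) ^ α * ((-x) ^ (2 * q + 1 + 0) * G.eval (-x)))
            = ∫ x in (-1 : ℝ)..1,
                -((1 - x ^ 2) ^ α * (x ^ (2 * q + 1 + 0) * G.eval x)) := by
              congr 1; funext x
              rw [neg_sq, hGeven, Odd.neg_pow (by simpa using odd_two_mul_add_one q)]
              ring
          _ = - ∫ x in (-1 : ℝ)..1, (1 - x ^ 2) ^ α * (x ^ (2 * q + 1 + 0) * G.eval x) :=
              intervalIntegral.integral_neg
      linarith [hodd]
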